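/- Let m ≥ 1 be the number of outcomes and n ≥ 1 the number of agents, and suppose each of the n agents' preferences is an independently and uniformly chosen linear order on the m outcomes (so all n-tuples of linear orders on the outcome set are equally probable). Then the expected number of Pareto optimal outcomes equals E(K_{m,n}) = - Σ_{i=1}^{m} (-1)^i · C(m, i) / i^{n-1}, where C(m, i) denotes the binomial coefficient. -/

import Mathlib

open Finset

/-- Counting permutations for which `x` is ranked strictly below every element of `S`. -/
lemma perm_min_card {m : ℕ} (x : Fin m) (S : Finset (Fin m)) (hx : x ∉ S) :
    (S.card + 1) * (Finset.univ.filter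
      (fun π : Fin m ≃ Fin m => ∀ o ∈ S, π x < π o)).card = Nat.factorial m := by
  classical
  set T : Finset (Fin m) := insert x S with hTdef
  have hxT : x ∈ T := Finset.mem_insert_self _ _
  have hTne : T.Nonempty := ⟨x, hxT⟩
  set am : (Fin m ≃ Fin m) → Fin m :=
    fun ρ => ρ.symm ((T.image ρ).min' (hTne.image ρ)) with ham_def
  have ham_app : ∀ ρ : Fin m ≃ Fin m, ρ (am ρ) = (T.image ρ).min' (hTne.image ρ) := by
    intro ρ; simp [ham_def]
  have ham_mem : ∀ ρ : Fin m ≃ Fin m, am ρ ∈ T := by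
    intro ρ
    obtain ⟨b, hb, hbe⟩ := Finset.mem_image.1 (Finset.min'_mem (T.image ρ) (hTne.image ρ))
    have : am ρ = b := by simp [ham_def, ← hbe]
    rwa [this]
  have ham_lt : ∀ (ρ : Fin m ≃ Fin m), ∀ o ∈ T, o ≠ am ρ → ρ (am ρ) < ρ o := by
    intro ρ o ho hne
    have hle : ρ (am ρ) ≤ ρ o := by
      rw [ham_app]
      exact Finset.min'_le _ _ (Finset.mem_image_of_mem ρ ho)
    exact lt_of_le_of_ne hle (fun h => hne (ρ.injective h).symm)
  have ham_unique : ∀ (ρ : Fin m ≃ Fin m) (a : Fin m), a ∈ T →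
      (∀ o ∈ T, o ≠ a → ρ a < ρ o) → am ρ = a := by
    intro ρ a ha hmin
    by_contra h
    have h1 : ρ a < ρ (am ρ) := hmin _ (ham_mem ρ) h
    have h2 : ρ (am ρ) < ρ a := ham_lt ρ a ha (fun e => h e.symm)
    exact absurd (h1.trans h2) (lt_irrefl _)
  -- swapped element properties
  have hswap_mem : ∀ a ∈ T, ∀ o ∈ S, Equiv.swap x a o ∈ T ∧ Equiv.swap x a o ≠ a := by
    intro a ha o ho
    have hox : o ≠ x := fun e => hx (e ▸ ho)
    by_cases hoa : o = a
    · subst hoa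
      rw [Equiv.swap_apply_right]
      exact ⟨hxT, fun e => hox e.symm⟩
    · rw [Equiv.swap_apply_of_ne_of_ne hox hoa]
      exact ⟨Finset.mem_insert_of_mem ho, hoa⟩
  -- the bijection
  let B := {π : Fin m ≃ Fin m // ∀ o ∈ S, π x < π o}
  let A := {a : Fin m // a ∈ T}
  have hB : ∀ ρ : Fin m ≃ Fin m, ∀ o ∈ S, ((Equiv.swap x (am ρ)).trans ρ) x
      < ((Equiv.swap x (am ρ)).trans ρ) o := by
    intro ρ o ho
    obtain ⟨h1, h2⟩ := hswap_mem (am ρ) (ham_mem ρ) o ho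
    simpa [Equiv.trans_apply] using ham_lt ρ _ h1 h2
  have hA : ∀ (a : Fin m), a ∈ T → ∀ (π : Fin m ≃ Fin m), (∀ o ∈ S, π x < π o) →
      am ((Equiv.swap x a).trans π) = a := by
    intro a ha π hπ
    apply ham_unique _ a ha
    intro o ho hne
    simp only [Equiv.trans_apply, Equiv.swap_apply_right]
    rcases Finset.mem_insert.1 ho with h | h
    · rw [h, Equiv.swap_apply_left]
      have hax : a ≠ x := fun e => hne (h.trans e.symm)
      have haS : a ∈ S := by
        rcases Finset.mem_insert.1 ha with h' | h'
        · exact absurd h' hax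
        · exact h'
      exact hπ a haS
    · have hox : o ≠ x := fun e => hx (e ▸ h)
      rw [Equiv.swap_apply_of_ne_of_ne hox hne]
      exact hπ o h
  let e : A × B ≃ (Fin m ≃ Fin m) :=
    { toFun := fun p => (Equiv.swap x p.1.1).trans p.2.1
      invFun := fun ρ => (⟨am ρ, ham_mem ρ⟩, ⟨(Equiv.swap x (am ρ)).trans ρ, hB ρ⟩)
      left_inv := by
        rintro ⟨⟨a, ha⟩, ⟨π, hπ⟩⟩
        have h1 : am ((Equiv.swap x a).trans π) = a := hA a ha π hπ
        ext z
        · simp [h1]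
        · simp only [h1, Equiv.trans_apply]
          rw [Equiv.swap_apply_self]
      right_inv := by
        intro ρ
        ext z
        simp only [Equiv.trans_apply]
        rw [Equiv.swap_apply_self] }
  have hcard := Fintype.card_congr e
  rw [Fintype.card_prod, Fintype.card_coe, Fintype.card_subtype] at hcard
  have hT : T.card = S.card + 1 := Finset.card_insert_of_notMem hx
  have hperm : Fintype.card (Fin m ≃ Fin m) = Nat.factorial m := by
    rw [Fintype.card_equiv (Equiv.refl _), Fintype.card_fin]
  rw [hT, hperm] at hcard
  exact hcard

lemma agents_count {m n : ℕ} (P : (Fin m ≃ Fin m) → Prop) [DecidablePred P] :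
    ∑ σ : Fin n → (Fin m ≃ Fin m), (if ∀ i, P (σ i) then (1:ℝ) else 0)
    = ((Finset.univ.filter P).card : ℝ) ^ n := by
  classical
  have h1 : ∀ σ : Fin n → (Fin m ≃ Fin m), (if ∀ i, P (σ i) then (1:ℝ) else 0)
      = ∏ i : Fin n, (if P (σ i) then (1:ℝ) else 0) := by
    intro σ; rw [Finset.prod_boole]; simp
  simp_rw [h1]
  have h2 : (Finset.univ : Finset (Fin n → (Fin m ≃ Fin m)))
      = Fintype.piFinset (fun _ => Finset.univ) := by simp
  rw [h2, ← Finset.prod_univ_sum (fun _ : Fin n => (Finset.univ : Finset (Fin m ≃ Fin m)))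
    (fun _ π => if P π then (1:ℝ) else 0)]
  rw [Finset.prod_const, Finset.card_univ, Fintype.card_fin]
  congr 1
  rw [Finset.card_filter]
  push_cast
  rfl

lemma key_count {m n : ℕ} (hm : 1 ≤ m) (ostar : Fin m) :
    ∑ σ : Fin n → (Fin m ≃ Fin m),
      (if ∀ o ∈ Finset.univ.erase ostar, ¬ ∀ i : Fin n, σ i ostar < σ i o then (1:ℝ) else 0)
    = ∑ k ∈ Finset.range m,
        ((m-1).choose k : ℝ) * (-1)^k * ((Nat.factorial m : ℝ)/(k+1))^n := by
  classical
  set E := Finset.univ.erase ostar with hE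
  -- step 1: expand the indicator as an inclusion-exclusion sum over subsets
  have step1 : ∀ σ : Fin n → (Fin m ≃ Fin m),
      (if ∀ o ∈ E, ¬ ∀ i : Fin n, σ i ostar < σ i o then (1:ℝ) else 0)
      = ∑ t ∈ E.powerset, (-1)^t.card *
          (if ∀ i : Fin n, ∀ o ∈ t, σ i ostar < σ i o then (1:ℝ) else 0) := by
    intro σ
    have e1 : (if ∀ o ∈ E, ¬ ∀ i : Fin n, σ i ostar < σ i o then (1:ℝ) else 0)
        = ∏ o ∈ E, ((-(if ∀ i : Fin n, σ i ostar < σ i o then (1:ℝ) else 0)) + 1) := by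
      by_cases h : ∀ o ∈ E, ¬ ∀ i : Fin n, σ i ostar < σ i o
      · rw [if_pos h]
        exact (Finset.prod_eq_one (fun o ho => by rw [if_neg (h o ho)]; norm_num)).symm
      · rw [if_neg h]
        push_neg at h
        obtain ⟨o, ho, hD⟩ := h
        symm
        apply Finset.prod_eq_zero ho
        rw [if_pos hD]; ring
    rw [e1, Finset.prod_add]
    apply Finset.sum_congr rfl
    intro t ht
    rw [Finset.prod_const_one, mul_one,
      Finset.prod_congr rfl (fun o (_ : o ∈ t) => by
        show (-(if ∀ i : Fin n, σ i ostar < σ i o then (1:ℝ) else 0)) = _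
        rw [neg_eq_neg_one_mul]),
      Finset.prod_mul_distrib, Finset.prod_const, Finset.prod_boole]
    have h2 : (∀ o ∈ t, ∀ i : Fin n, σ i ostar < σ i o)
        ↔ (∀ i : Fin n, ∀ o ∈ t, σ i ostar < σ i o) :=
      ⟨fun h i o ho => h o ho i, fun h o ho i => h i o ho⟩
    simp only [h2]
  simp_rw [step1]
  rw [Finset.sum_comm]
  -- step 2: compute the inner sum over profiles for each subset t
  have step2 : ∀ t ∈ E.powerset,
      (∑ σ : Fin n → (Fin m ≃ Fin m), (-1:ℝ)^t.card *
          (if ∀ i : Fin n, ∀ o ∈ t, σ i ostar < σ i o then (1:ℝ) else 0))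
      = (-1)^t.card * ((Nat.factorial m : ℝ)/(t.card+1))^n := by
    intro t ht
    rw [← Finset.mul_sum]
    congr 1
    rw [agents_count (fun π : Fin m ≃ Fin m => ∀ o ∈ t, π ostar < π o)]
    congr 1
    have hnot : ostar ∉ t := fun h =>
      (Finset.mem_erase.1 (Finset.mem_powerset.1 ht h)).1 rfl
    have hc := perm_min_card ostar t hnot
    have hne : ((t.card : ℝ) + 1) ≠ 0 := by positivity
    field_simp
    have := congrArg (fun z : ℕ => (z : ℝ)) hc
    push_cast at this ⊢
    linarith [this]
  rw [Finset.sum_congr rfl step2]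
  -- step 3: group subsets by cardinality
  rw [Finset.sum_powerset]
  have hEcard : E.card = m - 1 := by
    rw [hE, Finset.card_erase_of_mem (Finset.mem_univ _)]
    simp
  rw [hEcard]
  have hm1 : m - 1 + 1 = m := Nat.succ_pred_eq_of_pos hm
  rw [hm1]
  apply Finset.sum_congr rfl
  intro k hk
  rw [Finset.sum_congr rfl (fun t ht => by
    rw [(Finset.mem_powersetCard.1 ht).2]), Finset.sum_const, Finset.card_powersetCard,
    hEcard, nsmul_eq_mul]
  ring


/-- O'Neill's formula: with `m ≥ 1` outcomes and `n ≥ 1` agents whose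
preferences are independently and uniformly chosen linear orders on the outcomes
(each agent's linear order is encoded by a ranking bijection `σ i : Fin m ≃ Fin m`,
agent `i` weakly preferring `a` to `b` iff `σ i b ≤ σ i a`, so that all `(m!)^n`
profiles are equally probable), the expected number of Pareto optimal outcomes is
`E(K_{m,n}) = - ∑_{i=1}^{m} (-1)^i · C(m,i) / i^(n-1)`. -/
theorem expected_card_pareto_uniform (m n : ℕ) (hm : 1 ≤ m) (hn : 1 ≤ n) :
    (∑ σ : Fin n → (Fin m ≃ Fin m),
        ((Finset.univ.filter fun ostar : Fin m =>
            ¬ ∃ o : Fin m, (∀ i : Fin n, (σ i) ostar ≤ (σ i) o) ∧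
              ∃ j : Fin n, (σ j) ostar < (σ j) o).card : ℝ))
      / ((Nat.factorial m : ℝ)) ^ n
    = - ∑ i ∈ Finset.Icc 1 m, (-1 : ℝ) ^ i * (Nat.choose m i : ℝ) / (i : ℝ) ^ (n - 1) := by
  classical
  have hpar : ∀ (σ : Fin n → (Fin m ≃ Fin m)) (ostar : Fin m),
      (¬ ∃ o : Fin m, (∀ i : Fin n, σ i ostar ≤ σ i o) ∧ ∃ j : Fin n, σ j ostar < σ j o)
      ↔ ∀ o ∈ Finset.univ.erase ostar, ¬ ∀ i : Fin n, σ i ostar < σ i o := by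
    intro σ ostar
    constructor
    · intro h o ho hall
      exact h ⟨o, fun i => (hall i).le, ⟨0, hn⟩, hall _⟩
    · rintro h ⟨o, hle, j, hlt⟩
      have hne : o ≠ ostar := fun e => absurd (e ▸ hlt) (lt_irrefl _)
      refine h o (Finset.mem_erase.2 ⟨hne, Finset.mem_univ _⟩) (fun i => lt_of_le_of_ne (hle i) ?_)
      intro e
      exact hne ((σ i).injective e.symm)
  have hnum : (∑ σ : Fin n → (Fin m ≃ Fin m),
        ((Finset.univ.filter fun ostar : Fin m =>
            ¬ ∃ o : Fin m, (∀ i : Fin n, (σ i) ostar ≤ (σ i) o) ∧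
              ∃ j : Fin n, (σ j) ostar < (σ j) o).card : ℝ))
      = m * ∑ k ∈ Finset.range m,
          ((m-1).choose k : ℝ) * (-1)^k * ((Nat.factorial m : ℝ)/(k+1))^n := by
    have e1 : ∀ σ : Fin n → (Fin m ≃ Fin m),
        ((Finset.univ.filter fun ostar : Fin m =>
            ¬ ∃ o : Fin m, (∀ i : Fin n, (σ i) ostar ≤ (σ i) o) ∧
              ∃ j : Fin n, (σ j) ostar < (σ j) o).card : ℝ)
        = ∑ ostar : Fin m,
            (if ∀ o ∈ Finset.univ.erase ostar, ¬ ∀ i : Fin n, σ i ostar < σ i o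
              then (1:ℝ) else 0) := by
      intro σ
      rw [Finset.card_filter]
      push_cast
      apply Finset.sum_congr rfl
      intro ostar _
      have := hpar σ ostar
      simp only [this]
    simp_rw [e1]
    rw [Finset.sum_comm]
    rw [Finset.sum_congr rfl (fun ostar _ => key_count hm ostar), Finset.sum_const,
      Finset.card_univ, Fintype.card_fin, nsmul_eq_mul]
  rw [hnum]
  -- reindex the RHS sum
  have hR : ∑ i ∈ Finset.Icc 1 m, (-1 : ℝ) ^ i * (Nat.choose m i : ℝ) / (i : ℝ) ^ (n - 1)
      = ∑ k ∈ Finset.range m, (-1 : ℝ) ^ (k+1) * (Nat.choose m (k+1) : ℝ)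
          / ((k+1 : ℕ) : ℝ) ^ (n - 1) := by
    rw [← Finset.Ico_add_one_right_eq_Icc, Finset.sum_Ico_eq_sum_range]
    simp [add_comm]
  rw [hR, Finset.mul_sum, Finset.sum_div, ← Finset.sum_neg_distrib]
  apply Finset.sum_congr rfl
  intro k hk
  have hfac : (Nat.factorial m : ℝ) ≠ 0 := Nat.cast_ne_zero.2 (Nat.factorial_ne_zero m)
  have hk1 : ((k:ℝ)+1) ≠ 0 := by positivity
  have hch : (m : ℝ) * ((m-1).choose k : ℝ) = ((k:ℝ)+1) * (m.choose (k+1) : ℝ) := by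
    have h0 := Nat.add_one_mul_choose_eq (m-1) k
    rw [show m - 1 + 1 = m from by omega] at h0
    have h1 := congrArg (fun z : ℕ => (z : ℝ)) h0
    push_cast at h1
    linarith
  have hpow : ((k:ℝ)+1) ^ n = ((k:ℝ)+1) ^ (n-1) * ((k:ℝ)+1) := by
    conv_lhs => rw [show n = (n-1) + 1 from (Nat.succ_pred_eq_of_pos hn).symm]
    rw [pow_succ]
  have hkn : ((k:ℝ)+1) ^ (n-1) ≠ 0 := pow_ne_zero _ hk1
  have hFn : ((Nat.factorial m : ℝ)) ^ n ≠ 0 := pow_ne_zero _ hfac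
  push_cast
  rw [div_pow]
  have e2 : ((m:ℝ) * (((m-1).choose k : ℝ) * (-1)^k
        * ((Nat.factorial m : ℝ)^n/((k:ℝ)+1)^n))) / (Nat.factorial m : ℝ)^n
      = ((m:ℝ) * ((m-1).choose k : ℝ)) * (-1)^k / ((k:ℝ)+1)^n := by
    field_simp
  rw [e2, hch, hpow, pow_succ]
  field_simp
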